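/- Assume that for every i ∈ 𝐈, h_i(x) = ρ^i · (x − x*_i)⁺ for all x ∈ ℝ, where ρ^i > 0 and x*_i ≤ 0 are constants. Then there exists T > 0 such that the mapping F is nondecreasing on [0,T): for all 0 ≤ t ≤ t̃ < T and all i ∈ 𝐈, F_i(t) ≤ F_i(t̃). -/

import Mathlib

/-- The set of indices at which `a` attains its minimum. -/
noncomputable def argminSet {n : ℕ} (a : Fin n → ℝ) : Finset (Fin n) :=
  Finset.univ.filter (fun i => ∀ j, a i ≤ a j)

/-- The minimum entry of `a`. -/
noncomputable def minval {n : ℕ} (a : Fin n → ℝ) : ℝ := ⨅ i, a i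

/-- The restriction of `a` to the indices in `S`, reindexed by `Fin S.card`
in increasing order. -/
noncomputable def restrictVec {n : ℕ} (S : Finset (Fin n)) (a : Fin n → ℝ) :
    Fin S.card → ℝ :=
  fun i => a (S.orderIsoOfFin rfl i).1

/-- The "min-sensitive" partial order `⪕` on `ℝⁿ` (Definition 1 of the paper):
for `n = 1` it is the usual order; for `n ≥ 2`, `a ⪕ b` iff (i) `a = b`, or
(ii) `min a < min b`, or (iii) `min a = min b` and `Argmin b ⊊ Argmin a`, or
(iv) `min a = min b`, `Argmin a = Argmin b ⊊ {1,...,n}` and the restrictions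
of `a` and `b` to the complement of the common argmin set are related. -/
noncomputable def msLE : (n : ℕ) → (Fin n → ℝ) → (Fin n → ℝ) → Prop
  | 0, _, _ => True
  | 1, a, b => a 0 ≤ b 0
  | n + 2, a, b =>
    a = b ∨
    minval a < minval b ∨
    (minval a = minval b ∧ argminSet b ⊂ argminSet a) ∨
    (minval a = minval b ∧ argminSet a = argminSet b ∧ argminSet a ⊂ Finset.univ ∧
      msLE ((argminSet a)ᶜ).card (restrictVec (argminSet a)ᶜ a) (restrictVec (argminSet a)ᶜ b))
termination_by n => n
decreasing_by
  have hne : (argminSet a).Nonempty := by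
    obtain ⟨i, -, hi⟩ := Finset.exists_min_image Finset.univ a ⟨0, Finset.mem_univ 0⟩
    refine ⟨i, ?_⟩
    unfold argminSet
    exact Finset.mem_filter.mpr ⟨Finset.mem_univ i, fun j => hi j (Finset.mem_univ j)⟩
  have h1 : 0 < (argminSet a).card := Finset.card_pos.mpr hne
  have h2 : ((argminSet a)ᶜ).card = Fintype.card (Fin (n + 2)) - (argminSet a).card :=
    Finset.card_compl _
  simp only [Fintype.card_fin] at h2
  omega

/-- `x*_i`: the supremum of the zero set of a function. -/
noncomputable def xstar (f : ℝ → ℝ) : ℝ := sSup {x | f x = 0}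

/-- The admissible set `A_t`. -/
def admissible (I J : ℕ) (h : Fin I → ℝ → ℝ) (G : Fin J → Finset (Fin I)) (t : ℝ) :
    Set (Fin I → ℝ) :=
  {a | (∀ i, a i ≤ t) ∧ ∀ j, (∑ i ∈ G j, h i (a i)) ≤ t}

/-- `F` is the `⪕`-greatest element of `A_t`. -/
def IsGreatestMS (I J : ℕ) (h : Fin I → ℝ → ℝ) (G : Fin J → Finset (Fin I)) (t : ℝ)
    (F : Fin I → ℝ) : Prop :=
  F ∈ admissible I J h G t ∧ ∀ a ∈ admissible I J h G t, msLE I a F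
section Basic
variable {n : ℕ}

lemma mem_argminSet_iff (a : Fin n → ℝ) (i : Fin n) :
    i ∈ argminSet a ↔ ∀ j, a i ≤ a j := by
  simp [argminSet]

lemma argminSet_nonempty (hn : 0 < n) (a : Fin n → ℝ) : (argminSet a).Nonempty := by
  obtain ⟨i, -, hi⟩ := Finset.exists_min_image Finset.univ a ⟨⟨0, hn⟩, Finset.mem_univ _⟩
  exact ⟨i, (mem_argminSet_iff a i).mpr fun j => hi j (Finset.mem_univ j)⟩

lemma minval_eq_of_mem {a : Fin n → ℝ} {i : Fin n} (hi : i ∈ argminSet a) :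
    minval a = a i := by
  rw [mem_argminSet_iff] at hi
  have hbdd : BddBelow (Set.range a) := (Set.finite_range a).bddBelow
  have : Nonempty (Fin n) := ⟨i⟩
  exact le_antisymm (ciInf_le hbdd i) (le_ciInf hi)

lemma minval_le (hn : 0 < n) (a : Fin n → ℝ) (i : Fin n) : minval a ≤ a i := by
  obtain ⟨i0, h0⟩ := argminSet_nonempty hn a
  rw [minval_eq_of_mem h0]
  exact ((mem_argminSet_iff a i0).mp h0) i

lemma mem_argminSet_iff_eq (hn : 0 < n) {a : Fin n → ℝ} {i : Fin n} :
    i ∈ argminSet a ↔ a i = minval a := by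
  constructor
  · intro h; exact (minval_eq_of_mem h).symm
  · intro h
    rw [mem_argminSet_iff]
    intro j
    rw [h]; exact minval_le hn a j

lemma lt_of_not_mem_argminSet (hn : 0 < n) {a : Fin n → ℝ} {i : Fin n}
    (h : i ∉ argminSet a) : minval a < a i := by
  rcases lt_or_eq_of_le (minval_le hn a i) with h' | h'
  · exact h'
  · exact absurd ((mem_argminSet_iff_eq hn).mpr h'.symm) h

lemma minval_const (hn : 0 < n) (m : ℝ) : minval (fun _ : Fin n => m) = m := by
  have : (⟨0, hn⟩ : Fin n) ∈ argminSet (fun _ : Fin n => m) := by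
    rw [mem_argminSet_iff]; intro j; exact le_refl m
  simpa using minval_eq_of_mem this

lemma minval_fin_one (a : Fin 1 → ℝ) : minval a = a 0 := by
  have : (0 : Fin 1) ∈ argminSet a := by
    rw [mem_argminSet_iff]; intro j; rw [Subsingleton.elim j 0]
  exact minval_eq_of_mem this

end Basic

section Mlemmas

lemma msLE_refl : ∀ (n : ℕ) (a : Fin n → ℝ), msLE n a a
  | 0, a => by rw [msLE]; trivial
  | 1, a => by rw [msLE]
  | (n+2), a => by rw [msLE]; left; rfl

lemma msLE_of_minval_lt {n : ℕ} (hn : 0 < n) (a b : Fin n → ℝ) (h : minval a < minval b) :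
    msLE n a b := by
  match n, hn with
  | 1, _ => rw [msLE]; rw [minval_fin_one, minval_fin_one] at h; exact h.le
  | (n+2), _ => rw [msLE]; right; left; exact h

lemma msLE_minval_le {n : ℕ} (hn : 0 < n) {a b : Fin n → ℝ} (h : msLE n a b) :
    minval a ≤ minval b := by
  match n, hn with
  | 1, _ => rw [msLE] at h; rw [minval_fin_one, minval_fin_one]; exact h
  | (n+2), _ =>
    rw [msLE] at h
    rcases h with h | h | ⟨h, -⟩ | ⟨h, -⟩
    · rw [h]
    · exact h.le
    · exact h.le
    · exact h.le

lemma msLE_argmin_subset {n : ℕ} {a b : Fin n → ℝ} (h : msLE n a b)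
    (hmin : minval a = minval b) : argminSet b ⊆ argminSet a := by
  match n with
  | 0 => intro i _; exact i.elim0
  | 1 =>
    intro i hi
    rw [mem_argminSet_iff]
    intro j
    rw [Subsingleton.elim j i]
  | (n+2) =>
    rw [msLE] at h
    rcases h with h | h | ⟨-, h⟩ | ⟨-, h, -⟩
    · rw [h]
    · exact absurd hmin h.ne
    · exact h.subset
    · exact h.symm ▸ Finset.Subset.refl _

lemma msLE_cases {n : ℕ} (hn : 2 ≤ n) {a b : Fin n → ℝ} (h : msLE n a b) :
    a = b ∨
    minval a < minval b ∨
    (minval a = minval b ∧ argminSet b ⊂ argminSet a) ∨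
    (minval a = minval b ∧ argminSet a = argminSet b ∧ argminSet a ⊂ Finset.univ ∧
      msLE ((argminSet a)ᶜ).card (restrictVec (argminSet a)ᶜ a) (restrictVec (argminSet a)ᶜ b)) := by
  match n, hn with
  | (n+2), _ => rw [msLE] at h; exact h

end Mlemmas

section Restrict
variable {n : ℕ}

lemma restrictVec_apply (S : Finset (Fin n)) (a : Fin n → ℝ) (j : Fin S.card) :
    restrictVec S a j = a (S.orderIsoOfFin rfl j).1 := rfl

lemma orderIsoOfFin_mem (S : Finset (Fin n)) (j : Fin S.card) :
    ((S.orderIsoOfFin rfl j) : Fin n) ∈ S := (S.orderIsoOfFin rfl j).2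

lemma exists_orderIsoOfFin_eq {S : Finset (Fin n)} {i : Fin n} (hi : i ∈ S) :
    ∃ j : Fin S.card, ((S.orderIsoOfFin rfl j) : Fin n) = i := by
  refine ⟨(S.orderIsoOfFin rfl).symm ⟨i, hi⟩, ?_⟩
  simp

end Restrict

lemma msLE_antisymm_of_le : ∀ (n : ℕ) (a b : Fin n → ℝ), (∀ i, b i ≤ a i) → msLE n a b → a = b := by
  intro n
  induction n using Nat.strong_induction_on with
  | _ n ih =>
    match n with
    | 0 => intro a b _ _; funext i; exact i.elim0
    | 1 =>
      intro a b hle h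
      rw [msLE] at h
      funext i
      rw [Subsingleton.elim i 0]
      exact le_antisymm h (hle 0)
    | (n+2) =>
      intro a b hle h
      rw [msLE] at h
      have hminle : minval b ≤ minval a := by
        obtain ⟨i0, h0⟩ := argminSet_nonempty (by omega) a
        calc minval b ≤ b i0 := minval_le (by omega) b i0
        _ ≤ a i0 := hle i0
        _ = minval a := (minval_eq_of_mem h0).symm
      rcases h with h | h | ⟨hmin, hsub⟩ | ⟨hmin, heq, hssub, hrec⟩
      · exact h
      · exact absurd h (not_lt.mpr hminle)
      · exfalso
        obtain ⟨i0, hi0, hni0⟩ := Finset.exists_of_ssubset hsub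
        have : b i0 ≤ minval b := by
          calc b i0 ≤ a i0 := hle i0
          _ = minval a := (minval_eq_of_mem hi0).symm
          _ = minval b := hmin
        exact hni0 ((mem_argminSet_iff_eq (by omega)).mpr (le_antisymm this (minval_le (by omega) b i0)))
      · have hcard : ((argminSet a)ᶜ).card < n + 2 := by
          have h1 : 0 < (argminSet a).card := Finset.card_pos.mpr (argminSet_nonempty (by omega) a)
          have h2 : ((argminSet a)ᶜ).card = Fintype.card (Fin (n+2)) - (argminSet a).card :=
            Finset.card_compl _
          simp only [Fintype.card_fin] at h2
          omega
        have hresteq : restrictVec (argminSet a)ᶜ a = restrictVec (argminSet a)ᶜ b :=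
          ih _ hcard _ _ (fun j => hle _) hrec
        funext i
        by_cases hi : i ∈ argminSet a
        · have hib : i ∈ argminSet b := heq ▸ hi
          rw [minval_eq_of_mem hi] at hmin
          rw [hmin, minval_eq_of_mem hib]
        · obtain ⟨j, hj⟩ := exists_orderIsoOfFin_eq (Finset.mem_compl.mpr hi)
          have := congrFun hresteq j
          rw [restrictVec_apply, restrictVec_apply, hj] at this
          exact this

/-- Generalized admissible set with per-constraint capacities `c k * t`. -/
def genAdm (n κ : ℕ) (ρ xs : Fin n → ℝ) (u : Fin κ → Finset (Fin n)) (c : Fin κ → ℝ)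
    (t : ℝ) : Set (Fin n → ℝ) :=
  {a | (∀ i, a i ≤ t) ∧ ∀ k, (∑ i ∈ u k, ρ i * max (a i - xs i) 0) ≤ c k * t}

theorem gen_mono : ∀ (n : ℕ) (κ : ℕ) (ρ xs : Fin n → ℝ) (u : Fin κ → Finset (Fin n))
    (c : Fin κ → ℝ), (∀ i, 0 < ρ i) → (∀ i, xs i ≤ 0) → (∀ k, 0 ≤ c k) →
    ∀ (T0 : ℝ), 0 < T0 → ∀ (F : ℝ → Fin n → ℝ),
    (∀ t, 0 < t → t < T0 → F t ∈ genAdm n κ ρ xs u c t ∧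
        ∀ a ∈ genAdm n κ ρ xs u c t, msLE n a (F t)) →
    ∃ T, 0 < T ∧ T ≤ T0 ∧ ∀ t t', 0 < t → t ≤ t' → t' < T → ∀ i, F t i ≤ F t' i := by
  intro n
  induction n using Nat.strong_induction_on with
  | _ n ih =>
  intro κ ρ xs u c hρ hxs hc T0 hT0 F hF
  classical
  rcases Nat.eq_zero_or_pos n with hn0 | hn
  · subst hn0
    exact ⟨T0, hT0, le_refl _, fun t t' _ _ _ i => i.elim0⟩
  -- ### setup
  set V : Finset (Fin n) := Finset.univ.filter (fun i => ∃ k, i ∈ u k) with hVdef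
  have hmemV : ∀ (k) (i), i ∈ u k → i ∈ V := fun k i hi =>
    Finset.mem_filter.mpr ⟨Finset.mem_univ i, ⟨k, hi⟩⟩
  set cmu : Finset ℝ := insert (0:ℝ) (V.image xs) with hcmudef
  have hcmune : cmu.Nonempty := ⟨0, Finset.mem_insert_self _ _⟩
  set μ : ℝ := cmu.min' hcmune with hμdef
  have hμ0 : μ ≤ 0 := Finset.min'_le _ _ (Finset.mem_insert_self _ _)
  have hμxs : ∀ i ∈ V, μ ≤ xs i := fun i hi =>
    Finset.min'_le _ _ (Finset.mem_insert_of_mem (Finset.mem_image_of_mem xs hi))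
  set D : Fin κ → Finset (Fin n) := fun k => (u k).filter (fun i => xs i = μ) with hDdef
  set ρS : Finset (Fin n) → ℝ := fun s => ∑ i ∈ s, ρ i with hρSdef
  have hρS0 : ∀ s, 0 ≤ ρS s := fun s => Finset.sum_nonneg (fun i _ => (hρ i).le)
  have hρSpos : ∀ s, s.Nonempty → 0 < ρS s := fun s hs => Finset.sum_pos (fun i _ => hρ i) hs
  have hρSmono : ∀ s s', s ⊆ s' → ρS s ≤ ρS s' := fun s s' hss =>
    Finset.sum_le_sum_of_subset_of_nonneg hss (fun i _ _ => (hρ i).le)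
  set Kf : Finset (Fin κ) := Finset.univ.filter (fun k => (D k).Nonempty) with hKfdef
  set slope : Fin κ → ℝ := fun k => c k / ρS (D k) with hslopedef
  set cands : Finset ℝ := (Kf.image slope) ∪ (if μ = 0 then {1} else ∅) with hcandsdef
  have hcandsne : cands.Nonempty := by
    by_cases hμz : μ = 0
    · exact ⟨1, Finset.mem_union_right _ (by rw [if_pos hμz]; exact Finset.mem_singleton_self 1)⟩
    · have hμmem : μ ∈ cmu := Finset.min'_mem _ _
      rw [hcmudef] at hμmem
      rcases Finset.mem_insert.mp hμmem with h | h
      · exact absurd h hμz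
      · obtain ⟨i, hiV, hxi⟩ := Finset.mem_image.mp h
        obtain ⟨k, hik⟩ := (Finset.mem_filter.mp hiV).2
        have : k ∈ Kf := Finset.mem_filter.mpr ⟨Finset.mem_univ _,
          ⟨i, Finset.mem_filter.mpr ⟨hik, hxi⟩⟩⟩
        exact ⟨slope k, Finset.mem_union_left _ (Finset.mem_image_of_mem slope this)⟩
  set ε : ℝ := cands.min' hcandsne with hεdef
  have hcands_nonneg : ∀ x ∈ cands, (0:ℝ) ≤ x := by
    intro x hx
    rcases Finset.mem_union.mp hx with h | h
    · obtain ⟨k, -, rfl⟩ := Finset.mem_image.mp h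
      exact div_nonneg (hc k) (hρS0 _)
    · by_cases hμz : μ = 0
      · rw [if_pos hμz] at h
        rw [Finset.mem_singleton.mp h]; norm_num
      · rw [if_neg hμz] at h; exact absurd h (Finset.notMem_empty x)
  have hε0 : 0 ≤ ε := hcands_nonneg ε (Finset.min'_mem _ _)
  have hεslope : ∀ k, (D k).Nonempty → ε ≤ slope k := fun k hk =>
    Finset.min'_le _ _ (Finset.mem_union_left _ (Finset.mem_image_of_mem slope
      (Finset.mem_filter.mpr ⟨Finset.mem_univ _, hk⟩)))
  have hεkey : ∀ k, ε * ρS (D k) ≤ c k := by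
    intro k
    rcases (D k).eq_empty_or_nonempty with h | h
    · rw [h]; simpa [hρSdef] using hc k
    · have hpos := hρSpos _ h
      have := hεslope k h
      rw [hslopedef] at this
      calc ε * ρS (D k) ≤ (c k / ρS (D k)) * ρS (D k) :=
            mul_le_mul_of_nonneg_right this (hρS0 _)
        _ = c k := div_mul_cancel₀ _ (ne_of_gt hpos)
  have hε1 : μ = 0 → ε ≤ 1 := fun hμz =>
    Finset.min'_le _ _ (Finset.mem_union_right _ (by rw [if_pos hμz]; exact Finset.mem_singleton_self 1))
  set gapset : Finset (Fin n) := V.filter (fun i => μ < xs i) with hgapsetdef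
  set gap : ℝ := if h : gapset.Nonempty then (gapset.image (fun i => xs i - μ)).min' (h.image _) else 1
    with hgapdef
  have hgappos : 0 < gap := by
    rw [hgapdef]
    split
    · rename_i h
      have := Finset.min'_mem (gapset.image (fun i => xs i - μ)) (h.image _)
      obtain ⟨i, hi, heq⟩ := Finset.mem_image.mp this
      rw [← heq]
      have := (Finset.mem_filter.mp hi).2
      linarith
    · norm_num
  have hgaple : ∀ i ∈ V, μ < xs i → gap ≤ xs i - μ := by
    intro i hi hlt
    have hne : gapset.Nonempty := ⟨i, Finset.mem_filter.mpr ⟨hi, hlt⟩⟩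
    rw [hgapdef, dif_pos hne]
    exact Finset.min'_le _ _ (Finset.mem_image_of_mem _ (Finset.mem_filter.mpr ⟨hi, hlt⟩))
  have hε1pos : (0:ℝ) < ε + 1 := by linarith
  set T' : ℝ := min T0 (min (gap / (ε+1)) (if μ = 0 then T0 else (-μ)/(ε+1))) with hT'def
  have hT'pos : 0 < T' := by
    rw [hT'def]
    refine lt_min hT0 (lt_min (div_pos hgappos hε1pos) ?_)
    by_cases hμz : μ = 0
    · rw [if_pos hμz]; exact hT0
    · rw [if_neg hμz]
      have : μ < 0 := lt_of_le_of_ne hμ0 hμz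
      exact div_pos (by linarith) hε1pos
  have hT'le : T' ≤ T0 := min_le_left _ _
  have hb1 : ∀ t, 0 < t → t < T' → (ε+1)*t < gap := by
    intro t ht htT
    have h2 : t < gap / (ε+1) := lt_of_lt_of_le htT (le_trans (min_le_right _ _) (min_le_left _ _))
    calc (ε+1)*t = t * (ε+1) := mul_comm _ _
      _ < gap := (lt_div_iff₀ hε1pos).mp h2
  have hcap : ∀ d t, 0 ≤ d → d ≤ 1 → (μ = 0 → ε + d ≤ 1) → 0 < t → t < T' → μ + (ε+d)*t ≤ t := by
    intro d t hd0 hd1 hd2 ht htT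
    by_cases hμz : μ = 0
    · rw [hμz, zero_add]
      calc (ε+d)*t ≤ 1*t := mul_le_mul_of_nonneg_right (hd2 hμz) ht.le
        _ = t := one_mul t
    · have hμneg : μ < 0 := lt_of_le_of_ne hμ0 hμz
      have h2 : t < (-μ)/(ε+1) := by
        have := lt_of_lt_of_le htT (le_trans (min_le_right _ _) (min_le_right _ _))
        rwa [if_neg hμz] at this
      have h3 : (ε+d)*t ≤ (ε+1)*t := mul_le_mul_of_nonneg_right (by linarith) ht.le
      have h4 : (ε+1)*t < -μ := by
        calc (ε+1)*t = t * (ε+1) := mul_comm _ _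
          _ < -μ := (lt_div_iff₀ hε1pos).mp h2
      linarith
  -- reduction of constraint sums to the bottom level D k
  have hsum_red : ∀ (t d : ℝ), 0 ≤ d → d ≤ 1 → 0 < t → t < T' → ∀ (a : Fin n → ℝ),
      (∀ i, a i ≤ μ + (ε+d)*t) → ∀ k,
      (∑ i ∈ u k, ρ i * max (a i - xs i) 0) = ∑ i ∈ D k, ρ i * max (a i - μ) 0 := by
    intro t d hd0 hd1 ht htT a ha k
    rw [hDdef]
    rw [Finset.sum_filter]
    apply Finset.sum_congr rfl
    intro i hi
    by_cases hxi : xs i = μ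
    · rw [if_pos hxi, hxi]
    · rw [if_neg hxi]
      have hlt : μ < xs i := lt_of_le_of_ne (hμxs i (hmemV k i hi)) (Ne.symm hxi)
      have h1 : a i - xs i < 0 := by
        have h2 := hgaple i (hmemV k i hi) hlt
        have h3 : (ε+d)*t ≤ (ε+1)*t := mul_le_mul_of_nonneg_right (by linarith) ht.le
        have h4 := hb1 t ht htT
        have h5 := ha i
        linarith
      rw [max_eq_right h1.le, mul_zero]
  -- (g1): the constant vector μ + ε t is admissible
  have hconstmem : ∀ t, 0 < t → t < T' → (fun _ : Fin n => μ + ε*t) ∈ genAdm n κ ρ xs u c t := by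
    intro t ht htT
    constructor
    · intro i
      have := hcap 0 t (le_refl 0) (by norm_num) (fun h => by simpa using hε1 h) ht htT
      simpa using this
    · intro k
      have hred := hsum_red t 0 (le_refl 0) (by norm_num) ht htT (fun _ => μ + ε*t)
        (fun i => by simp [le_refl]) k
      rw [hred]
      have hterm : ∀ i ∈ D k, ρ i * max (μ + ε*t - μ) 0 = ρ i * (ε*t) := by
        intro i hi
        rw [add_sub_cancel_left, max_eq_left (mul_nonneg hε0 ht.le)]
      rw [Finset.sum_congr rfl hterm, ← Finset.sum_mul]
      calc ρS (D k) * (ε*t) = (ε * ρS (D k)) * t := by ring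
        _ ≤ c k * t := mul_le_mul_of_nonneg_right (hεkey k) ht.le
  -- (g2): the minimum of F t equals μ + ε t
  have hminF : ∀ t, 0 < t → t < T' → minval (F t) = μ + ε*t := by
    intro t ht htT
    have hFt := hF t ht (lt_of_lt_of_le htT hT'le)
    apply le_antisymm
    · -- minval (F t) ≤ μ + ε t, via the binding candidate
      have hεmem : ε ∈ cands := Finset.min'_mem _ _
      rcases Finset.mem_union.mp hεmem with hεim | hεone
      · obtain ⟨k, hkKf, hks⟩ := Finset.mem_image.mp hεim
        have hDne : (D k).Nonempty := (Finset.mem_filter.mp hkKf).2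
        have hρSD := hρSpos _ hDne
        have hlow : ρS (D k) * (minval (F t) - μ) ≤ ∑ i ∈ u k, ρ i * max (F t i - xs i) 0 := by
          have h1 : ∀ i ∈ D k, ρ i * (minval (F t) - μ) ≤ ρ i * max (F t i - xs i) 0 := by
            intro i hi
            have hxi : xs i = μ := (Finset.mem_filter.mp hi).2
            have h2 : minval (F t) - μ ≤ max (F t i - xs i) 0 := by
              have := minval_le hn (F t) i
              rw [hxi]
              have h3 : F t i - μ ≤ max (F t i - μ) 0 := le_max_left _ _
              linarith
            exact mul_le_mul_of_nonneg_left h2 (hρ i).le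
          calc ρS (D k) * (minval (F t) - μ) = ∑ i ∈ D k, ρ i * (minval (F t) - μ) := by
                rw [Finset.sum_mul]
            _ ≤ ∑ i ∈ D k, ρ i * max (F t i - xs i) 0 := Finset.sum_le_sum h1
            _ ≤ ∑ i ∈ u k, ρ i * max (F t i - xs i) 0 :=
                Finset.sum_le_sum_of_subset_of_nonneg (Finset.filter_subset _ _)
                  (fun i _ _ => mul_nonneg (hρ i).le (le_max_right _ _))
        have hup : (∑ i ∈ u k, ρ i * max (F t i - xs i) 0) ≤ c k * t := hFt.1.2 k
        have hck : c k = ε * ρS (D k) := by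
          rw [← hks, hslopedef]
          field_simp
        have : ρS (D k) * (minval (F t) - μ) ≤ ρS (D k) * (ε * t) := by
          calc ρS (D k) * (minval (F t) - μ) ≤ c k * t := le_trans hlow hup
            _ = ρS (D k) * (ε * t) := by rw [hck]; ring
        have := le_of_mul_le_mul_left this hρSD
        linarith
      · by_cases hμz : μ = 0
        · rw [if_pos hμz] at hεone
          have hεeq : ε = 1 := Finset.mem_singleton.mp hεone
          have : minval (F t) ≤ F t ⟨0, hn⟩ := minval_le hn _ _
          have h2 := hFt.1.1 ⟨0, hn⟩
          rw [hμz, hεeq]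
          linarith
        · rw [if_neg hμz] at hεone
          exact absurd hεone (Finset.notMem_empty ε)
    · -- μ + ε t ≤ minval (F t)
      have h1 := hFt.2 _ (hconstmem t ht htT)
      have h2 := msLE_minval_le hn h1
      rwa [minval_const hn] at h2
  by_cases hcaseA : μ = 0 ∧ ε = 1
  · -- Case A : the cap is binding, F t = t·1
    refine ⟨T', hT'pos, hT'le, ?_⟩
    intro t t' ht htt' ht'T i
    have htT' : t < T' := lt_of_le_of_lt htt' ht'T
    have h1 : F t i ≤ t := (hF t ht (lt_of_lt_of_le htT' hT'le)).1.1 i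
    have h2 : minval (F t') ≤ F t' i := minval_le hn _ _
    have h3 := hminF t' (lt_of_lt_of_le ht htt') ht'T
    rw [hcaseA.1, hcaseA.2] at h3
    simp only [zero_add, one_mul] at h3
    linarith [h2, h3.symm.le]
  -- Case B : some group is binding
  set B : Finset (Fin κ) := Kf.filter (fun k => slope k = ε) with hBdef
  have hBne : B.Nonempty := by
    have hεmem : ε ∈ cands := Finset.min'_mem _ _
    rcases Finset.mem_union.mp hεmem with hεim | hεone
    · obtain ⟨k, hkKf, hks⟩ := Finset.mem_image.mp hεim
      exact ⟨k, Finset.mem_filter.mpr ⟨hkKf, hks⟩⟩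
    · by_cases hμz : μ = 0
      · rw [if_pos hμz] at hεone
        exact absurd ⟨hμz, Finset.mem_singleton.mp hεone⟩ hcaseA
      · rw [if_neg hμz] at hεone
        exact absurd hεone (Finset.notMem_empty ε)
  set S : Finset (Fin n) := B.biUnion D with hSdef
  have hSne : S.Nonempty := by
    obtain ⟨k, hk⟩ := hBne
    obtain ⟨i, hi⟩ := (Finset.mem_filter.mp (Finset.mem_filter.mp hk).1).2
    exact ⟨i, Finset.mem_biUnion.mpr ⟨k, hk, hi⟩⟩
  have hSxs : ∀ i ∈ S, xs i = μ := by
    intro i hi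
    obtain ⟨k, -, hik⟩ := Finset.mem_biUnion.mp hi
    exact (Finset.mem_filter.mp hik).2
  have hDsubS : ∀ k ∈ B, D k ⊆ S := fun k hk => fun i hi => Finset.mem_biUnion.mpr ⟨k, hk, hi⟩
  have hSsubD : ∀ (k) (i), i ∈ u k → i ∈ S → i ∈ D k := fun k i hiu hiS =>
    Finset.mem_filter.mpr ⟨hiu, hSxs i hiS⟩
  set Knb : Finset (Fin κ) := Kf \ B with hKnbdef
  set δ₁ : ℝ := if h : Knb.Nonempty then ((Knb.image (fun k => slope k - ε)).min' (h.image _)) else 1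
    with hδ₁def
  have hδ₁pos : 0 < δ₁ := by
    rw [hδ₁def]
    split
    · rename_i h
      have hmem := Finset.min'_mem (Knb.image (fun k => slope k - ε)) (h.image _)
      obtain ⟨k, hk, heq⟩ := Finset.mem_image.mp hmem
      rw [← heq]
      have hkKf : k ∈ Kf := (Finset.mem_sdiff.mp hk).1
      have hkne : slope k ≠ ε := by
        intro hcon
        exact (Finset.mem_sdiff.mp hk).2 (Finset.mem_filter.mpr ⟨hkKf, hcon⟩)
      have := hεslope k (Finset.mem_filter.mp hkKf).2
      rcases lt_or_eq_of_le this with h' | h'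
      · linarith
      · exact absurd h'.symm hkne
    · norm_num
  have hδ₁le : ∀ k ∈ Knb, ε + δ₁ ≤ slope k := by
    intro k hk
    have hne : Knb.Nonempty := ⟨k, hk⟩
    rw [hδ₁def, dif_pos hne]
    have := Finset.min'_le (Knb.image (fun k => slope k - ε)) _ (Finset.mem_image_of_mem _ hk)
    linarith
  set δ₀ : ℝ := min δ₁ (if μ = 0 then 1-ε else 1) with hδ₀def
  have hδ₀pos : 0 < δ₀ := by
    rw [hδ₀def]
    refine lt_min hδ₁pos ?_
    by_cases hμz : μ = 0
    · rw [if_pos hμz]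
      have h1 := hε1 hμz
      have h2 : ε ≠ 1 := fun hcon => hcaseA ⟨hμz, hcon⟩
      rcases lt_or_eq_of_le h1 with h' | h'
      · linarith
      · exact absurd h' h2
    · rw [if_neg hμz]; norm_num
  have hδ₀1 : δ₀ ≤ 1 := by
    rw [hδ₀def]
    by_cases hμz : μ = 0
    · rw [if_pos hμz]
      have := min_le_right δ₁ (1-ε)
      linarith
    · rw [if_neg hμz]
      exact min_le_right _ _
  have hδ₀sum : μ = 0 → ε + δ₀ ≤ 1 := by
    intro hμz
    rw [hδ₀def, if_pos hμz]
    linarith [min_le_right δ₁ (1-ε)]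
  have hδ₀δ₁ : δ₀ ≤ δ₁ := min_le_left _ _
  -- the competitor a*
  set astar : ℝ → Fin n → ℝ := fun t i => if i ∈ S then μ + ε*t else μ + (ε+δ₀)*t with hastardef
  have hastar_le : ∀ t, 0 ≤ t → ∀ i, astar t i ≤ μ + (ε+δ₀)*t := by
    intro t ht i
    rw [hastardef]
    dsimp only
    split
    · nlinarith
    · exact le_refl _
  have hastar_mem : ∀ t, 0 < t → t < T' → astar t ∈ genAdm n κ ρ xs u c t := by
    intro t ht htT
    constructor
    · intro i
      exact le_trans (hastar_le t ht.le i) (hcap δ₀ t hδ₀pos.le hδ₀1 hδ₀sum ht htT)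
    · intro k
      rw [hsum_red t δ₀ hδ₀pos.le hδ₀1 ht htT (astar t) (hastar_le t ht.le) k]
      by_cases hkB : k ∈ B
      · have hterm : ∀ i ∈ D k, ρ i * max (astar t i - μ) 0 = ρ i * (ε*t) := by
          intro i hi
          have hiS : i ∈ S := hDsubS k hkB hi
          rw [hastardef]
          dsimp only
          rw [if_pos hiS, add_sub_cancel_left, max_eq_left (mul_nonneg hε0 ht.le)]
        rw [Finset.sum_congr rfl hterm, ← Finset.sum_mul]
        have hρSD : 0 < ρS (D k) := hρSpos _ (Finset.mem_filter.mp (Finset.mem_filter.mp hkB).1).2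
        have hck : c k = ε * ρS (D k) := by
          have h' : c k / ρS (D k) = ε := (Finset.mem_filter.mp hkB).2
          exact (div_eq_iff (ne_of_gt hρSD)).mp h'
        rw [hck]
        calc ρS (D k) * (ε * t) = ε * ρS (D k) * t := by ring
          _ ≤ ε * ρS (D k) * t := le_refl _
      · have hterm : ∀ i ∈ D k, ρ i * max (astar t i - μ) 0 ≤ ρ i * ((ε+δ₀)*t) := by
          intro i hi
          have h1 : astar t i - μ ≤ (ε+δ₀)*t := by
            have := hastar_le t ht.le i
            linarith
          have h2 : max (astar t i - μ) 0 ≤ (ε+δ₀)*t := max_le h1 (mul_nonneg (by linarith) ht.le)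
          exact mul_le_mul_of_nonneg_left h2 (hρ i).le
        have hb : (∑ i ∈ D k, ρ i * max (astar t i - μ) 0) ≤ ρS (D k) * ((ε+δ₀)*t) := by
          calc (∑ i ∈ D k, ρ i * max (astar t i - μ) 0) ≤ ∑ i ∈ D k, ρ i * ((ε+δ₀)*t) :=
              Finset.sum_le_sum hterm
            _ = ρS (D k) * ((ε+δ₀)*t) := by rw [← Finset.sum_mul]
        rcases (D k).eq_empty_or_nonempty with hD | hD
        · rw [hD, Finset.sum_empty]
          exact mul_nonneg (hc k) ht.le
        · have hkKf : k ∈ Kf := Finset.mem_filter.mpr ⟨Finset.mem_univ _, hD⟩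
          have hkKnb : k ∈ Knb := Finset.mem_sdiff.mpr ⟨hkKf, hkB⟩
          have hsl := hδ₁le k hkKnb
          have hρSD : 0 < ρS (D k) := hρSpos _ hD
          have hck : (ε + δ₁) * ρS (D k) ≤ c k := by
            rw [hslopedef] at hsl
            calc (ε + δ₁) * ρS (D k) ≤ (c k / ρS (D k)) * ρS (D k) :=
                mul_le_mul_of_nonneg_right hsl (hρS0 _)
              _ = c k := div_mul_cancel₀ _ (ne_of_gt hρSD)
          calc (∑ i ∈ D k, ρ i * max (astar t i - μ) 0) ≤ ρS (D k) * ((ε+δ₀)*t) := hb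
            _ ≤ ρS (D k) * ((ε+δ₁)*t) :=
                mul_le_mul_of_nonneg_left
                  (mul_le_mul_of_nonneg_right (add_le_add_right hδ₀δ₁ ε) ht.le) (hρS0 _)
            _ = ((ε+δ₁) * ρS (D k)) * t := by ring
            _ ≤ c k * t := mul_le_mul_of_nonneg_right hck ht.le
  have hastar_val : ∀ t, 0 < t → (minval (astar t) = μ + ε*t ∧ argminSet (astar t) = S) := by
    intro t ht
    obtain ⟨i₀, hi₀⟩ := hSne
    have hle' : ∀ j, astar t i₀ ≤ astar t j := by
      intro j
      rw [hastardef]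
      dsimp only
      rw [if_pos hi₀]
      split
      · exact le_refl _
      · have h1 : ε*t ≤ (ε+δ₀)*t := mul_le_mul_of_nonneg_right (by linarith) ht.le
        linarith
    have hmem : i₀ ∈ argminSet (astar t) := (mem_argminSet_iff _ _).mpr hle'
    have hminv : minval (astar t) = μ + ε*t := by
      rw [minval_eq_of_mem hmem, hastardef]
      dsimp only
      rw [if_pos hi₀]
    refine ⟨hminv, ?_⟩
    ext i
    rw [mem_argminSet_iff_eq hn, hminv, hastardef]
    dsimp only
    constructor
    · intro h
      by_contra hiS
      rw [if_neg hiS] at h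
      have h2 : 0 < δ₀*t := mul_pos hδ₀pos ht
      have h3 : (ε+δ₀)*t = ε*t + δ₀*t := by ring
      rw [h3] at h
      linarith
    · intro h
      rw [if_pos h]
  -- (g3): the argmin of F t is S
  have hargminF : ∀ t, 0 < t → t < T' → argminSet (F t) = S := by
    intro t ht htT
    have hFt := hF t ht (lt_of_lt_of_le htT hT'le)
    apply Finset.Subset.antisymm
    · have h1 := hFt.2 _ (hastar_mem t ht htT)
      have h2 : minval (astar t) = minval (F t) := by
        rw [(hastar_val t ht).1, hminF t ht htT]
      have := msLE_argmin_subset h1 h2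
      rw [(hastar_val t ht).2] at this
      exact this
    · intro i hiS
      obtain ⟨k, hkB, hiD⟩ := Finset.mem_biUnion.mp hiS
      have hρSD : 0 < ρS (D k) := hρSpos _ ⟨i, hiD⟩
      have hck : c k = ε * ρS (D k) := by
        have h' : c k / ρS (D k) = ε := (Finset.mem_filter.mp hkB).2
        exact (div_eq_iff (ne_of_gt hρSD)).mp h'
      set g : Fin n → ℝ := fun i => if i ∈ D k then ρ i * (ε*t) else 0 with hgdef
      have hgle : ∀ j ∈ u k, g j ≤ ρ j * max (F t j - xs j) 0 := by
        intro j hj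
        rw [hgdef]
        dsimp only
        split
        · rename_i hjD
          have hxj : xs j = μ := (Finset.mem_filter.mp hjD).2
          have h1 : μ + ε*t ≤ F t j := by
            rw [← hminF t ht htT]; exact minval_le hn _ _
          have h2 : ε*t ≤ max (F t j - xs j) 0 := by
            rw [hxj]
            have h3 : ε*t ≤ F t j - μ := by linarith
            exact le_trans h3 (le_max_left _ _)
          exact mul_le_mul_of_nonneg_left h2 (hρ j).le
        · exact mul_nonneg (hρ j).le (le_max_right _ _)
      have hsumg : (∑ j ∈ u k, g j) = c k * t := by
        rw [hgdef, Finset.sum_ite_mem]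
        have : u k ∩ D k = D k := Finset.inter_eq_right.mpr (Finset.filter_subset _ _)
        rw [this, ← Finset.sum_mul, hck]
        ring
      have hsumfg : (∑ j ∈ u k, ρ j * max (F t j - xs j) 0) = ∑ j ∈ u k, g j := by
        apply le_antisymm
        · rw [hsumg]; exact hFt.1.2 k
        · exact Finset.sum_le_sum hgle
      have heach := (Finset.sum_eq_sum_iff_of_le hgle).mp hsumfg.symm
      have hi_eq := heach i (Finset.filter_subset _ _ hiD)
      rw [hgdef] at hi_eq
      dsimp only at hi_eq
      rw [if_pos hiD] at hi_eq
      have hxi : xs i = μ := (Finset.mem_filter.mp hiD).2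
      have hmax : max (F t i - xs i) 0 = ε*t := by
        have := mul_left_cancel₀ (ne_of_gt (hρ i)) hi_eq.symm
        linarith [this]
      have hFle : F t i ≤ μ + ε*t := by
        have h1 : F t i - xs i ≤ max (F t i - xs i) 0 := le_max_left _ _
        rw [hmax, hxi] at h1
        linarith
      rw [mem_argminSet_iff_eq hn, hminF t ht htT]
      have h2 : μ + ε*t ≤ F t i := by
        rw [← hminF t ht htT]; exact minval_le hn _ _
      linarith
  -- helper evaluations of F on and off S
  have hmcap : ∀ t, 0 < t → t < T' → μ + ε*t ≤ t := by
    intro t ht htT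
    have := hcap 0 t (le_refl 0) (by norm_num) (fun h => by simpa using hε1 h) ht htT
    simpa using this
  have hFS : ∀ t, 0 < t → t < T' → ∀ i ∈ S, F t i = μ + ε*t := by
    intro t ht htT i hiS
    have hmem : i ∈ argminSet (F t) := by rw [hargminF t ht htT]; exact hiS
    rw [← minval_eq_of_mem hmem, hminF t ht htT]
  have hFgt : ∀ t, 0 < t → t < T' → ∀ i, i ∉ S → μ + ε*t < F t i := by
    intro t ht htT i hiS
    have hmem : i ∉ argminSet (F t) := by rw [hargminF t ht htT]; exact hiS
    have := lt_of_not_mem_argminSet hn hmem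
    rwa [hminF t ht htT] at this
  have hεmul : ∀ t t' : ℝ, t ≤ t' → ε * t ≤ ε * t' := fun t t' h =>
    mul_le_mul_of_nonneg_left h hε0
  by_cases hSuniv : S = Finset.univ
  · -- all coordinates are at the bottom level
    refine ⟨T', hT'pos, hT'le, ?_⟩
    intro t t' ht htt' ht'T i
    have htT' : t < T' := lt_of_le_of_lt htt' ht'T
    have ht' : 0 < t' := lt_of_lt_of_le ht htt'
    have hiS : i ∈ S := hSuniv ▸ Finset.mem_univ i
    rw [hFS t ht htT' i hiS, hFS t' ht' ht'T i hiS]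
    have := hεmul t t' htt'
    linarith
  -- ### the recursive step
  set Sc : Finset (Fin n) := Sᶜ with hScdef
  have hScne : Sc.Nonempty := by
    rw [Finset.nonempty_iff_ne_empty, hScdef]
    intro hcon
    exact hSuniv (by simpa using congrArg (fun s => sᶜ) hcon)
  have hn' : 0 < Sc.card := Finset.card_pos.mpr hScne
  have hcards : S.card + Sc.card = n := by
    rw [hScdef]
    have := Finset.card_add_card_compl S
    simpa using this
  have hn'lt : Sc.card < n := by
    have hS1 : 0 < S.card := Finset.card_pos.mpr hSne
    omega
  have hn2 : 2 ≤ n := by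
    have hS1 : 0 < S.card := Finset.card_pos.mpr hSne
    omega
  set emb : Fin Sc.card → Fin n := fun j => (Sc.orderIsoOfFin rfl j).1 with hembdef
  have hembmem : ∀ j, emb j ∈ Sc := fun j => (Sc.orderIsoOfFin rfl j).2
  have hembnS : ∀ j, emb j ∉ S := fun j => Finset.mem_compl.mp (hembmem j)
  have hembinj : Function.Injective emb := fun a b h =>
    (Sc.orderIsoOfFin rfl).injective (Subtype.coe_injective h)
  have hembsurj : ∀ i ∈ Sc, ∃ j, emb j = i := fun i hi => exists_orderIsoOfFin_eq hi
  set ρ' : Fin Sc.card → ℝ := fun j => ρ (emb j) with hρ'def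
  set xs' : Fin Sc.card → ℝ := fun j => xs (emb j) with hxs'def
  set u' : Fin κ → Finset (Fin Sc.card) := fun k => Finset.univ.filter (fun j => emb j ∈ u k)
    with hu'def
  set uS : Fin κ → Finset (Fin n) := fun k => (u k).filter (fun i => i ∈ S) with huSdef
  set c' : Fin κ → ℝ := fun k => c k - ε * ρS (uS k) with hc'def
  have hρ'pos : ∀ j, 0 < ρ' j := fun j => hρ _
  have hxs'le : ∀ j, xs' j ≤ 0 := fun j => hxs _
  have huSsubD : ∀ k, uS k ⊆ D k := by
    intro k i hi
    exact hSsubD k i (Finset.mem_filter.mp hi).1 (Finset.mem_filter.mp hi).2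
  have hc'0 : ∀ k, 0 ≤ c' k := by
    intro k
    rw [hc'def]
    dsimp only
    have h1 : ε * ρS (uS k) ≤ ε * ρS (D k) :=
      mul_le_mul_of_nonneg_left (hρSmono _ _ (huSsubD k)) hε0
    have h2 := hεkey k
    linarith
  have himg : ∀ k, (u' k).image emb = (u k).filter (fun i => i ∉ S) := by
    intro k
    ext i
    constructor
    · intro hi
      obtain ⟨j, hj, hji⟩ := Finset.mem_image.mp hi
      have hju : emb j ∈ u k := (Finset.mem_filter.mp hj).2
      rw [hji] at hju
      refine Finset.mem_filter.mpr ⟨hju, ?_⟩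
      rw [← hji]
      exact hembnS j
    · intro hi
      have hiu := (Finset.mem_filter.mp hi).1
      have hins := (Finset.mem_filter.mp hi).2
      obtain ⟨j, hj⟩ := hembsurj i (Finset.mem_compl.mpr hins)
      exact Finset.mem_image.mpr ⟨j, Finset.mem_filter.mpr ⟨Finset.mem_univ _, by rw [hj]; exact hiu⟩, hj⟩
  have htrans : ∀ (f : Fin n → ℝ) (k : Fin κ),
      (∑ j ∈ u' k, f (emb j)) = ∑ i ∈ (u k).filter (fun i => i ∉ S), f i := by
    intro f k
    rw [← himg k]
    exact (Finset.sum_image (fun a _ b _ h => hembinj h)).symm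
  have hsplit : ∀ (f : Fin n → ℝ) (k : Fin κ),
      (∑ i ∈ u k, f i) = (∑ i ∈ uS k, f i) + ∑ i ∈ (u k).filter (fun i => i ∉ S), f i := by
    intro f k
    rw [huSdef]
    exact (Finset.sum_filter_add_sum_filter_not _ _ _).symm
  have hsumS : ∀ t, 0 < t → t < T' → ∀ k,
      (∑ i ∈ uS k, ρ i * max (F t i - xs i) 0) = ε * ρS (uS k) * t := by
    intro t ht htT k
    have hterm : ∀ i ∈ uS k, ρ i * max (F t i - xs i) 0 = ρ i * (ε*t) := by
      intro i hi
      have hiS : i ∈ S := (Finset.mem_filter.mp hi).2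
      rw [hFS t ht htT i hiS, hSxs i hiS, add_sub_cancel_left,
        max_eq_left (mul_nonneg hε0 ht.le)]
    rw [Finset.sum_congr rfl hterm, ← Finset.sum_mul]
    ring
  -- restriction of F is the greatest element of the residual system
  have hF'great : ∀ t, 0 < t → t < T' →
      (restrictVec Sc (F t)) ∈ genAdm Sc.card κ ρ' xs' u' c' t ∧
      ∀ abar ∈ genAdm Sc.card κ ρ' xs' u' c' t, msLE Sc.card abar (restrictVec Sc (F t)) := by
    intro t ht htT
    have hFt := hF t ht (lt_of_lt_of_le htT hT'le)
    constructor
    · constructor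
      · intro j
        exact hFt.1.1 (emb j)
      · intro k
        have h0 : (∑ j ∈ u' k, ρ' j * max (restrictVec Sc (F t) j - xs' j) 0)
            = ∑ j ∈ u' k, (fun i => ρ i * max (F t i - xs i) 0) (emb j) := rfl
        rw [h0, htrans (fun i => ρ i * max (F t i - xs i) 0) k]
        have h1 := hsplit (fun i => ρ i * max (F t i - xs i) 0) k
        have h2 := hsumS t ht htT k
        have h3 := hFt.1.2 k
        have h4 : c' k * t = c k * t - ε * ρS (uS k) * t := by rw [hc'def]; ring
        linarith
    · intro abar habar
      rcases lt_or_ge (minval abar) (minval (restrictVec Sc (F t))) with hlt | hge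
      · exact msLE_of_minval_lt hn' _ _ hlt
      · -- extend abar to the full system
        have hminFr : μ + ε*t < minval (restrictVec Sc (F t)) := by
          obtain ⟨j0, hj0⟩ := argminSet_nonempty hn' (restrictVec Sc (F t))
          rw [minval_eq_of_mem hj0, restrictVec_apply]
          exact hFgt t ht htT _ (hembnS j0)
        set atild : Fin n → ℝ := fun i =>
          if h : i ∈ Sc then abar ((Sc.orderIsoOfFin rfl).symm ⟨i, h⟩) else μ + ε*t
          with hatilddef
        have hrest : restrictVec Sc atild = abar := by
          funext j
          rw [restrictVec_apply, hatilddef]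
          dsimp only
          rw [dif_pos ((Sc.orderIsoOfFin rfl j).2)]
          congr 1
          have h5 : (⟨(Sc.orderIsoOfFin rfl j).1, (Sc.orderIsoOfFin rfl j).2⟩ : {x // x ∈ Sc})
              = Sc.orderIsoOfFin rfl j := Subtype.ext rfl
          rw [h5, OrderIso.symm_apply_apply]
        have hatS : ∀ i ∈ S, atild i = μ + ε*t := by
          intro i hiS
          rw [hatilddef]
          dsimp only
          rw [dif_neg (fun h => (Finset.mem_compl.mp h) hiS)]
        have hatSc : ∀ j, atild (emb j) = abar j := fun j => congrFun hrest j
        have habargt : ∀ j, μ + ε*t < abar j :=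
          fun j => lt_of_lt_of_le hminFr (le_trans hge (minval_le hn' abar j))
        have hatgt : ∀ i, i ∉ S → μ + ε*t < atild i := by
          intro i hiS
          obtain ⟨j, hj⟩ := hembsurj i (Finset.mem_compl.mpr hiS)
          rw [← hj, hatSc j]
          exact habargt j
        have hatmem : atild ∈ genAdm n κ ρ xs u c t := by
          constructor
          · intro i
            by_cases hiS : i ∈ S
            · rw [hatS i hiS]; exact hmcap t ht htT
            · obtain ⟨j, hj⟩ := hembsurj i (Finset.mem_compl.mpr hiS)
              rw [← hj, hatSc j]
              exact habar.1 j
          · intro k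
            have h1 := hsplit (fun i => ρ i * max (atild i - xs i) 0) k
            have h2 : (∑ i ∈ uS k, ρ i * max (atild i - xs i) 0) = ε * ρS (uS k) * t := by
              have hterm : ∀ i ∈ uS k, ρ i * max (atild i - xs i) 0 = ρ i * (ε*t) := by
                intro i hi
                have hiS : i ∈ S := (Finset.mem_filter.mp hi).2
                rw [hatS i hiS, hSxs i hiS, add_sub_cancel_left,
                  max_eq_left (mul_nonneg hε0 ht.le)]
              rw [Finset.sum_congr rfl hterm, ← Finset.sum_mul]
              ring
            have h3 : (∑ i ∈ (u k).filter (fun i => i ∉ S), ρ i * max (atild i - xs i) 0)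
                ≤ c' k * t := by
              rw [← htrans (fun i => ρ i * max (atild i - xs i) 0) k]
              have h0 : (∑ j ∈ u' k, (fun i => ρ i * max (atild i - xs i) 0) (emb j))
                  = ∑ j ∈ u' k, ρ' j * max (abar j - xs' j) 0 := by
                apply Finset.sum_congr rfl
                intro j _
                dsimp only
                rw [hatSc j]
              rw [h0]
              exact habar.2 k
            have h4 : c' k * t = c k * t - ε * ρS (uS k) * t := by rw [hc'def]; ring
            linarith
        have hatmin : minval atild = μ + ε*t := by
          obtain ⟨i0, hi0⟩ := hSne
          have hmem : i0 ∈ argminSet atild := by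
            rw [mem_argminSet_iff]
            intro j
            by_cases hjS : j ∈ S
            · rw [hatS i0 hi0, hatS j hjS]
            · rw [hatS i0 hi0]
              exact (hatgt j hjS).le
          rw [minval_eq_of_mem hmem, hatS i0 hi0]
        have hatarg : argminSet atild = S := by
          ext i
          rw [mem_argminSet_iff_eq hn, hatmin]
          constructor
          · intro h
            by_contra hiS
            exact absurd h (ne_of_gt (hatgt i hiS))
          · intro h
            exact hatS i h
        have hmsle := hFt.2 _ hatmem
        rcases msLE_cases hn2 hmsle with heq | hlt2 | ⟨hmineq, hss⟩ | ⟨-, -, -, hrec⟩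
        · rw [← heq, hrest]
          exact msLE_refl _ _
        · exfalso
          rw [hatmin, hminF t ht htT] at hlt2
          exact lt_irrefl _ hlt2
        · exfalso
          rw [hatarg, hargminF t ht htT] at hss
          exact ssubset_irrefl _ hss
        · rw [hatarg, ← hScdef, hrest] at hrec
          exact hrec
  -- apply the induction hypothesis to the residual system
  obtain ⟨T, hTpos, hTle, hmono⟩ := ih Sc.card hn'lt κ ρ' xs' u' c' hρ'pos hxs'le hc'0 T'
    hT'pos (fun t => restrictVec Sc (F t)) hF'great
  refine ⟨T, hTpos, le_trans hTle hT'le, ?_⟩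
  intro t t' ht htt' ht'T i
  have ht'T' : t' < T' := lt_of_lt_of_le ht'T hTle
  have htT' : t < T' := lt_of_le_of_lt htt' ht'T'
  have ht' : 0 < t' := lt_of_lt_of_le ht htt'
  by_cases hiS : i ∈ S
  · rw [hFS t ht htT' i hiS, hFS t' ht' ht'T' i hiS]
    have := hεmul t t' htt'
    linarith
  · obtain ⟨j, hj⟩ := hembsurj i (Finset.mem_compl.mpr hiS)
    have h1 : F t (emb j) ≤ F t' (emb j) := hmono t t' ht htt' ht'T j
    rw [hj] at h1
    exact h1
/-- in the linear case `h_i(x) = ρ_i (x - x*_i)⁺` with `ρ_i > 0` and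
`x*_i ≤ 0`, the mapping `F` is nondecreasing on some interval `[0, T)`, `T > 0`. -/
theorem F_locally_monotone_linear
    (I J : ℕ) (hI : 0 < I) (hJ : 0 < J)
    (ρ xs : Fin I → ℝ)
    (hρ : ∀ i, 0 < ρ i)
    (hxs : ∀ i, xs i ≤ 0)
    (G : Fin J → Finset (Fin I))
    (hGinj : Function.Injective G)
    (hGne : ∀ j, (G j).Nonempty)
    (hGcover : ∀ i, ∃ j, i ∈ G j)
    (F : ℝ → Fin I → ℝ)
    (hF : ∀ t : ℝ, 0 ≤ t →
      IsGreatestMS I J (fun i x => ρ i * max (x - xs i) 0) G t (F t)) :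
    ∃ T : ℝ, 0 < T ∧
      ∀ t t' : ℝ, 0 ≤ t → t ≤ t' → t' < T → ∀ i, F t i ≤ F t' i := by
  classical
  -- identify the admissible set with the generalized one
  have hsets : ∀ t : ℝ, genAdm I J ρ xs G (fun _ => 1) t
      = admissible I J (fun i x => ρ i * max (x - xs i) 0) G t := by
    intro t
    ext a
    simp [genAdm, admissible]
  have hGen : ∀ t, 0 < t → t < 1 → F t ∈ genAdm I J ρ xs G (fun _ => 1) t ∧
      ∀ a ∈ genAdm I J ρ xs G (fun _ => 1) t, msLE I a (F t) := by
    intro t ht _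
    have h := hF t ht.le
    rw [hsets t]
    exact ⟨h.1, fun a ha => h.2 a ha⟩
  obtain ⟨T, hTpos, hTle, hmono⟩ := gen_mono I J ρ xs G (fun _ => 1) hρ hxs
    (fun _ => by norm_num) 1 one_pos F hGen
  -- lower bound : xs ≤ F t' for all t' ≥ 0
  have hxsle : ∀ t' : ℝ, 0 ≤ t' → ∀ i, xs i ≤ F t' i := by
    intro t' ht' i
    have h := hF t' ht'
    set cmax : Fin I → ℝ := fun i => max (F t' i) (xs i) with hcmaxdef
    have hcmem : cmax ∈ admissible I J (fun i x => ρ i * max (x - xs i) 0) G t' := by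
      constructor
      · intro i
        exact max_le (h.1.1 i) (le_trans (hxs i) ht')
      · intro j
        have hterm : ∀ i ∈ G j, ρ i * max (cmax i - xs i) 0 = ρ i * max (F t' i - xs i) 0 := by
          intro i _
          rw [hcmaxdef]
          dsimp only
          rcases le_total (F t' i) (xs i) with hle | hle
          · rw [max_eq_right hle]
            have h1 : max (xs i - xs i) 0 = 0 := by simp
            have h2 : max (F t' i - xs i) 0 = 0 := max_eq_right (by linarith)
            rw [h1, h2]
          · rw [max_eq_left hle]
        calc (∑ i ∈ G j, ρ i * max (cmax i - xs i) 0)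
            = ∑ i ∈ G j, ρ i * max (F t' i - xs i) 0 := Finset.sum_congr rfl hterm
          _ ≤ t' := h.1.2 j
    have hmsle := h.2 cmax hcmem
    have heq := msLE_antisymm_of_le I cmax (F t') (fun i => le_max_left _ _) hmsle
    have := congrFun heq i
    rw [hcmaxdef] at this
    dsimp only at this
    rw [← this]
    exact le_max_right _ _
  -- at t = 0 the value is below xs
  have hF0 : ∀ i, F 0 i ≤ xs i := by
    intro i
    obtain ⟨j, hij⟩ := hGcover i
    have h := hF 0 (le_refl 0)
    have hsum := h.1.2 j
    have hnonneg : ∀ i ∈ G j, 0 ≤ ρ i * max (F 0 i - xs i) 0 :=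
      fun i _ => mul_nonneg (hρ i).le (le_max_right _ _)
    have hzero : ∀ i ∈ G j, ρ i * max (F 0 i - xs i) 0 = 0 := by
      have hle : (∑ i ∈ G j, ρ i * max (F 0 i - xs i) 0) ≤ 0 := hsum
      have hge : 0 ≤ ∑ i ∈ G j, ρ i * max (F 0 i - xs i) 0 := Finset.sum_nonneg hnonneg
      exact (Finset.sum_eq_zero_iff_of_nonneg hnonneg).mp (le_antisymm hle hge)
    have h1 := hzero i hij
    have h2 : max (F 0 i - xs i) 0 = 0 := by
      rcases mul_eq_zero.mp h1 with h' | h'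
      · exact absurd h' (ne_of_gt (hρ i))
      · exact h'
    have h3 : F 0 i - xs i ≤ 0 := by
      by_contra hcon
      push_neg at hcon
      rw [max_eq_left hcon.le] at h2
      linarith
    linarith
  refine ⟨T, hTpos, ?_⟩
  intro t t' h0t htt' ht'T i
  rcases eq_or_lt_of_le h0t with h0 | h0
  · have ht' : (0:ℝ) ≤ t' := le_trans h0t htt'
    rw [← h0]
    exact le_trans (hF0 i) (hxsle t' ht' i)
  · exact hmono t t' h0 htt' ht'T i
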